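/- Let M = ![![0,0,1,0],![1,0,0,0],![0,0,1/2,1/2],![0,1,0,0]] and let p = ![0, 1/4, 1/2, 1/4]. Then for every column j : Fin 4, ∑ i, p i * M i j ≥ 1/4. That is, the mixed strategy (B,C,D with probabilities 1/4, 1/2, 1/4) guarantees the Magician an expected payoff of at least 1/4 against every pure (hence every mixed) opponent strategy. -/

import Mathlib

theorem stmt_8
    (M : Fin 4 → Fin 4 → ℚ)
    (hM : M = ![![0,0,1,0],![1,0,0,0],![0,0,1/2,1/2],![0,1,0,0]])
    (p : Fin 4 → ℚ) (hp : p = ![0, 1/4, 1/2, 1/4]) :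
    ∀ j : Fin 4, 1/4 ≤ ∑ i : Fin 4, p i * M i j := by
  subst hM hp
  intro j; fin_cases j <;> norm_num [Fin.sum_univ_four, Matrix.cons_val_zero, Matrix.cons_val_one, Matrix.head_cons, Matrix.vecHead, Matrix.vecTail, Matrix.cons_val_two, Matrix.cons_val_three]
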